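/- There is no map Δ : Ω → Ω⊠Ω of DB-algebras (i.e. preserving both gradings, the product ∘, the differential ∂, and the operators d_i) with Δ(e) = e⊠e that is simultaneously coassociative and symmetric (invariant under the signed flip τ). In fact, any symmetric such Δ must satisfy Δ(b) = B + ½A, and one computes (Δ⊠id)(B + ½A) ≠ (id⊠Δ)(B + ½A). -/

import Mathlib

/-
STATEMENT 15: There is no morphism of DB-algebras Δ : Ω → Ω⊠Ω with Δ(e) = e⊠e which is
simultaneously coassociative and symmetric (invariant under the signed flip τ).  In fact
any symmetric such Δ satisfies Δ(b) = B + ½A, and the coassociativity identity fails for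
B + ½A.  Here Ω is the Maurer-Cartan DB-algebra, realized as the span of the words in
{a,b,c} (0 = a, 1 = b, 2 = c) with product x∘y = x⋄c⋄y, differential ∂ the signed
derivation for ⋄ with ∂b = c−a, ∂a = ∂c = 0, and operators d_i inserting the letter a
at position i; Ω⊠Ω is the tensor DB-algebra with the Koszul-signed product.
A DB-morphism preserves the bigrading, ∘, ∂ and the dᵢ's.
-/

noncomputable section

abbrev Word := FreeMonoid (Fin 3)
abbrev Om : Type := MonoidAlgebra ℝ Word
abbrev P2 : Type := (Word × Word) →₀ ℝ
abbrev T3 : Type := (Word × Word × Word) →₀ ℝ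

def W (w : Word) : Om := MonoidAlgebra.single w 1
def W2 (w w' : Word) : P2 := Finsupp.single (w, w') 1

def aW : Word := FreeMonoid.of 0
def bW : Word := FreeMonoid.of 1
def cW : Word := FreeMonoid.of 2

def bcount (w : Word) : ℕ := (FreeMonoid.toList w).count 1

/-- the Koszul-signed product ⋄ on Ω⊠Ω. -/
def tmul (f g : P2) : P2 :=
  f.sum fun p r => g.sum fun q s =>
    Finsupp.single (p.1 * q.1, p.2 * q.2)
      (r * s * ((-1 : ℝ) ^ (bcount p.2 * bcount q.1)))

/-- d_i on Ω: insertion of the letter a at position i. -/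
def diOm (i : ℕ) : Om →ₗ[ℝ] Om :=
  MonoidAlgebra.mapDomainLinearMap ℝ ℝ
    (fun w : Word => FreeMonoid.ofList ((FreeMonoid.toList w).insertIdx (i - 1) (0 : Fin 3)))

/-- d_i on Ω⊠Ω : d_i(x⊠y) = d_i x ⊠ d_i y. -/
def diP2 (i : ℕ) : P2 →ₗ[ℝ] P2 :=
  Finsupp.lmapDomain ℝ ℝ
    (fun p : Word × Word =>
      (FreeMonoid.ofList ((FreeMonoid.toList p.1).insertIdx (i - 1) (0 : Fin 3)),
       FreeMonoid.ofList ((FreeMonoid.toList p.2).insertIdx (i - 1) (0 : Fin 3))))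

/-- the bidegree (k, -j) piece of Ω : words of length k−1 with j occurrences of b. -/
def Gr1 (k j : ℕ) : Set Om :=
  {f | ∃ w : Word, (FreeMonoid.toList w).length + 1 = k ∧ bcount w = j ∧ f = W w}

/-- the bidegree (k, -j) piece of Ω⊠Ω. -/
def Gr2 (k j : ℕ) : Set P2 :=
  {f | ∃ p : Word × Word, (FreeMonoid.toList p.1).length + 1 = k ∧
    (FreeMonoid.toList p.2).length + 1 = k ∧ bcount p.1 + bcount p.2 = j ∧
    f = Finsupp.single p 1}

/-- the signed flip τ(x⊠y) = (−1)^{l(x)l(y)} y⊠x. -/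
def flipP2 (f : P2) : P2 :=
  f.sum fun p r =>
    (((-1 : ℝ) ^ (bcount p.1 * bcount p.2)) * r) • Finsupp.single (p.2, p.1) (1 : ℝ)

def Bel : P2 := W2 bW aW + W2 cW bW
def Ael : P2 := W2 bW cW + W2 aW bW - W2 bW aW - W2 cW bW

-- ## helpers

instance : DecidableEq Word := inferInstanceAs (DecidableEq (List (Fin 3)))

lemma bcount_one : bcount (1 : Word) = 0 := rfl
lemma bcount_a : bcount aW = 0 := rfl
lemma bcount_b : bcount bW = 1 := rfl
lemma bcount_c : bcount cW = 0 := rfl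

lemma tmul_single (p q : Word × Word) (r s : ℝ) :
    tmul (Finsupp.single p r) (Finsupp.single q s) =
      Finsupp.single (p.1 * q.1, p.2 * q.2) (r * s * ((-1 : ℝ) ^ (bcount p.2 * bcount q.1))) := by
  unfold tmul
  rw [Finsupp.sum_single_index, Finsupp.sum_single_index]
  · simp
  · simp

lemma word_len1 {w : Word} (h : (FreeMonoid.toList w).length = 1) :
    w = aW ∨ w = bW ∨ w = cW := by
  obtain ⟨x, hx⟩ := List.length_eq_one_iff.mp h
  have hw : w = FreeMonoid.ofList [x] := by rw [← hx, FreeMonoid.ofList_toList]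
  subst hw
  fin_cases x
  · left; rfl
  · right; left; rfl
  · right; right; rfl

lemma mapDomain_sub' (φ : Word → Word × Word) (x y : Om) :
    Finsupp.mapDomain φ (x - y).coeff = Finsupp.mapDomain φ x.coeff - Finsupp.mapDomain φ y.coeff := by
  show Finsupp.mapDomain φ (x.coeff - y.coeff) = _
  rw [← Finsupp.lmapDomain_apply ℝ ℝ, map_sub, Finsupp.lmapDomain_apply, Finsupp.lmapDomain_apply]

lemma sum4 {N : Type*} [AddCommMonoid N] (p1 p2 p3 p4 : Word × Word) (c1 c2 c3 c4 : ℝ)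
    (g : Word × Word → ℝ → N) (hz : ∀ p, g p 0 = 0)
    (hadd : ∀ p r s, g p (r + s) = g p r + g p s) :
    (Finsupp.single p1 c1 + Finsupp.single p2 c2 + Finsupp.single p3 c3
      + Finsupp.single p4 c4).sum g = g p1 c1 + g p2 c2 + g p3 c3 + g p4 c4 := by
  rw [Finsupp.sum_add_index' hz hadd, Finsupp.sum_add_index' hz hadd,
    Finsupp.sum_add_index' hz hadd, Finsupp.sum_single_index (hz _),
    Finsupp.sum_single_index (hz _), Finsupp.sum_single_index (hz _),
    Finsupp.sum_single_index (hz _)]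

lemma flipP2_apply (f : P2) (x y : Word) :
    flipP2 f (x, y) = ((-1 : ℝ) ^ (bcount y * bcount x)) * f (y, x) := by
  unfold flipP2
  rw [Finsupp.sum_apply, Finsupp.sum_eq_single (y, x)]
  · rw [Finsupp.smul_apply, Finsupp.single_eq_same, smul_eq_mul, mul_one]
  · intro p hp hne
    rw [Finsupp.smul_apply, Finsupp.single_apply, if_neg, smul_zero]
    intro hEq
    exact hne (Prod.ext (congrArg Prod.snd hEq) (congrArg Prod.fst hEq))
  · intro _; simp

def S4 : Set (Word × Word) := {(bW, aW), (bW, cW), (aW, bW), (cW, bW)}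

lemma decomp (f : P2) (hf : f ∈ Finsupp.supported ℝ ℝ S4) :
    f = f (bW, aW) • W2 bW aW + f (bW, cW) • W2 bW cW + f (aW, bW) • W2 aW bW
      + f (cW, bW) • W2 cW bW := by
  ext q
  by_cases h : q ∈ S4
  · simp only [S4, Set.mem_insert_iff, Set.mem_singleton_iff] at h
    rcases h with rfl | rfl | rfl | rfl <;>
      simp (config := { decide := true }) [W2, Finsupp.single_apply]
  · have h0 : f q = 0 := by
      by_contra hne
      exact h (hf (Finsupp.mem_support_iff.2 hne))
    simp only [S4, Set.mem_insert_iff, Set.mem_singleton_iff, not_or] at h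
    obtain ⟨h1, h2, h3, h4⟩ := h
    rw [h0]
    simp [W2, Finsupp.single_apply, Ne.symm h1, Ne.symm h2, Ne.symm h3, Ne.symm h4]

lemma belael : Bel + (1 / 2 : ℝ) • Ael
    = Finsupp.single (bW, aW) (1/2 : ℝ) + Finsupp.single (bW, cW) (1/2 : ℝ)
      + Finsupp.single (aW, bW) (1/2 : ℝ) + Finsupp.single (cW, bW) (1/2 : ℝ) := by
  unfold Bel Ael W2
  have h : ∀ p : Word × Word, Finsupp.single p (1/2 : ℝ) = (1/2 : ℝ) • Finsupp.single p (1:ℝ) := by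
    intro p; rw [Finsupp.smul_single, smul_eq_mul, mul_one]
  rw [h, h, h, h]
  module

lemma gr2_sub : Gr2 2 1 ⊆ (Finsupp.supported ℝ ℝ S4 : Submodule ℝ P2) := by
  rintro f ⟨⟨w1, w2⟩, h1, h2, h3, rfl⟩
  dsimp only at h1 h2 h3
  have l1 : (FreeMonoid.toList w1).length = 1 := by omega
  have l2 : (FreeMonoid.toList w2).length = 1 := by omega
  apply Finsupp.single_mem_supported
  rcases word_len1 l1 with rfl | rfl | rfl <;> rcases word_len1 l2 with rfl | rfl | rfl <;>
    simp_all [bcount_a, bcount_b, bcount_c] <;>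
    simp [S4]

theorem stmt15
    -- ∂ on Ω:
    (D1 : Om →ₗ[ℝ] Om)
    (ha : D1 (W aW) = 0) (hc : D1 (W cW) = 0) (hb : D1 (W bW) = W cW - W aW)
    (hleib : ∀ w w' : Word,
      D1 (W (w * w')) = D1 (W w) * W w' + ((-1 : ℝ) ^ (bcount w)) • (W w * D1 (W w')))
    -- ∂ on Ω⊠Ω :
    (D2 : P2 →ₗ[ℝ] P2)
    (hD2 : ∀ w w' : Word,
      D2 (W2 w w') = Finsupp.mapDomain (fun u : Word => (u, w')) (D1 (W w)).coeff
        + ((-1 : ℝ) ^ (bcount w)) • Finsupp.mapDomain (fun u : Word => (w, u)) (D1 (W w')).coeff)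
    -- Δ : Ω → Ω⊠Ω a morphism of DB-algebras with Δ(e) = e⊠e :
    (Δ : Om →ₗ[ℝ] P2)
    (hunit : Δ (W 1) = W2 1 1)
    (hgrade : ∀ k j : ℕ, ∀ f ∈ Submodule.span ℝ (Gr1 k j),
      Δ f ∈ Submodule.span ℝ (Gr2 k j))
    (hcomp : ∀ f g : Om, Δ (f * W cW * g) = tmul (Δ f) (tmul (W2 cW cW) (Δ g)))
    (hpartial : ∀ f : Om, Δ (D1 f) = D2 (Δ f))
    (hdi : ∀ (i : ℕ) (f : Om), 1 ≤ i → Δ (diOm i f) = diP2 i (Δ f)) :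
    -- if Δ is symmetric then Δ(b) = B + ½A:
    ((∀ f : Om, flipP2 (Δ f) = Δ f) → Δ (W bW) = Bel + (1 / 2 : ℝ) • Ael) ∧
    -- and Δ cannot be simultaneously symmetric and coassociative:
    ¬ ((∀ f : Om, flipP2 (Δ f) = Δ f) ∧
        (∀ f : Om,
          -- (Δ ⊠ id) (Δ f) = (id ⊠ Δ) (Δ f) :
          ((Δ f).sum fun p r =>
            r • ((Δ (W p.1)).sum fun q s => Finsupp.single (q.1, q.2, p.2) s))
          = ((Δ f).sum fun p r =>
            r • ((Δ (W p.2)).sum fun q s => Finsupp.single (p.1, q.1, q.2) s)))) := by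
  -- Δ(c) = c⊠c
  have hΔc : Δ (W cW) = W2 cW cW := by
    have h := hcomp (W 1) (W 1)
    rw [hunit] at h
    have h1 : W (1 : Word) * W cW * W (1 : Word) = W cW := by
      simp [W, MonoidAlgebra.single_mul_single]
    rw [h1] at h
    rw [h]
    unfold W2
    rw [tmul_single, tmul_single]
    simp [bcount_one, bcount_c]
  -- Δ(a) = a⊠a
  have hΔa : Δ (W aW) = W2 aW aW := by
    have h := hdi 1 (W 1) le_rfl
    have h1 : diOm 1 (W 1) = W aW := by
      have e : diOm 1 (W 1) = MonoidAlgebra.ofCoeff (Finsupp.mapDomain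
          (fun w : Word => FreeMonoid.ofList ((FreeMonoid.toList w).insertIdx 0 (0 : Fin 3)))
          (Finsupp.single (1 : Word) (1 : ℝ))) := rfl
      rw [e, Finsupp.mapDomain_single]
      rfl
    have h2 : diP2 1 (Δ (W 1)) = W2 aW aW := by
      rw [hunit]
      have e : diP2 1 (W2 1 1) = Finsupp.mapDomain
          (fun p : Word × Word =>
            (FreeMonoid.ofList ((FreeMonoid.toList p.1).insertIdx 0 (0 : Fin 3)),
             FreeMonoid.ofList ((FreeMonoid.toList p.2).insertIdx 0 (0 : Fin 3))))
          (Finsupp.single ((1 : Word), (1 : Word)) (1 : ℝ)) := rfl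
      rw [e, Finsupp.mapDomain_single]
      rfl
    rw [h1, h2] at h
    exact h
  -- Δ(b) is supported on the four pairs
  have hsupp : Δ (W bW) ∈ Finsupp.supported ℝ ℝ S4 := by
    have hm : Δ (W bW) ∈ Submodule.span ℝ (Gr2 2 1) := by
      apply hgrade 2 1
      exact Submodule.subset_span ⟨bW, rfl, rfl, rfl⟩
    exact Submodule.span_le.2 gr2_sub hm
  have hdec := decomp _ hsupp
  set α := Δ (W bW) (bW, aW) with hαdef
  set β := Δ (W bW) (bW, cW) with hβdef
  set γ := Δ (W bW) (aW, bW) with hγdef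
  set δ := Δ (W bW) (cW, bW) with hδdef
  -- D2 on the four basis elements
  have hD2ba : D2 (W2 bW aW) = W2 cW aW - W2 aW aW := by
    rw [hD2, hb, ha, bcount_b, mapDomain_sub']
    unfold W W2
    simp only [MonoidAlgebra.coeff_single]
    rw [Finsupp.mapDomain_single, Finsupp.mapDomain_single]
    simp
  have hD2bc : D2 (W2 bW cW) = W2 cW cW - W2 aW cW := by
    rw [hD2, hc, hb, bcount_b, mapDomain_sub']
    unfold W W2
    simp only [MonoidAlgebra.coeff_single]
    rw [Finsupp.mapDomain_single, Finsupp.mapDomain_single]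
    simp
  have hD2ab : D2 (W2 aW bW) = W2 aW cW - W2 aW aW := by
    rw [hD2, ha, hb, bcount_a, mapDomain_sub']
    unfold W W2
    simp only [MonoidAlgebra.coeff_single]
    rw [Finsupp.mapDomain_single, Finsupp.mapDomain_single]
    simp
  have hD2cb : D2 (W2 cW bW) = W2 cW cW - W2 cW aW := by
    rw [hD2, hc, hb, bcount_c, mapDomain_sub']
    unfold W W2
    simp only [MonoidAlgebra.coeff_single]
    rw [Finsupp.mapDomain_single, Finsupp.mapDomain_single]
    simp
  -- the ∂-compatibility equation
  have hEq : W2 cW cW - W2 aW aW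
      = α • (W2 cW aW - W2 aW aW) + β • (W2 cW cW - W2 aW cW)
        + γ • (W2 aW cW - W2 aW aW) + δ • (W2 cW cW - W2 cW aW) := by
    have h := hpartial (W bW)
    rw [hb, map_sub, hΔc, hΔa] at h
    rw [h]
    conv_lhs => rw [hdec]
    rw [map_add, map_add, map_add, map_smul, map_smul, map_smul, map_smul,
      hD2ba, hD2bc, hD2ab, hD2cb]
  have e1 := DFunLike.congr_fun hEq (cW, aW)
  have e2 := DFunLike.congr_fun hEq (aW, aW)
  have e3 := DFunLike.congr_fun hEq (cW, cW)
  have e4 := DFunLike.congr_fun hEq (aW, cW)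
  simp (config := { decide := true })
    [W2, Finsupp.single_apply, Finsupp.sub_apply, Finsupp.add_apply, Finsupp.smul_apply,
     smul_eq_mul] at e1 e2 e3 e4
  -- symmetry determines the coefficients
  have key : (∀ f : Om, flipP2 (Δ f) = Δ f) →
      α = 1/2 ∧ β = 1/2 ∧ γ = 1/2 ∧ δ = 1/2 := by
    intro hsym
    have s1 := DFunLike.congr_fun (hsym (W bW)) (aW, bW)
    have s2 := DFunLike.congr_fun (hsym (W bW)) (cW, bW)
    rw [flipP2_apply] at s1 s2
    norm_num [bcount_a, bcount_b, bcount_c] at s1 s2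
    rw [← hαdef, ← hγdef] at s1
    rw [← hβdef, ← hδdef] at s2
    refine ⟨by linarith, by linarith, by linarith, by linarith⟩
  have main1 : (∀ f : Om, flipP2 (Δ f) = Δ f) → Δ (W bW) = Bel + (1 / 2 : ℝ) • Ael := by
    intro hsym
    obtain ⟨hA, hB, hC, hD⟩ := key hsym
    rw [belael, hdec, hA, hB, hC, hD]
    simp [W2, Finsupp.smul_single]
  refine ⟨main1, ?_⟩
  rintro ⟨hsym, hco⟩
  have hsingle : Δ (W bW)
      = Finsupp.single (bW, aW) (1/2 : ℝ) + Finsupp.single (bW, cW) (1/2 : ℝ)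
        + Finsupp.single (aW, bW) (1/2 : ℝ) + Finsupp.single (cW, bW) (1/2 : ℝ) := by
    rw [main1 hsym, belael]
  have expand : ∀ {N : Type} [AddCommMonoid N] [Module ℝ N] (h : Word × Word → N),
      ((Δ (W bW)).sum fun p r => r • h p)
        = (1/2 : ℝ) • h (bW, aW) + (1/2 : ℝ) • h (bW, cW) + (1/2 : ℝ) • h (aW, bW)
          + (1/2 : ℝ) • h (cW, bW) := by
    intro N _ _ h
    rw [hsingle, sum4 (g := fun p r => r • h p)
      (hz := fun p => zero_smul ℝ (h p)) (hadd := fun p r s => add_smul r s (h p))]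
  have expandb : ∀ (g : Word × Word → Word × Word × Word),
      ((Δ (W bW)).sum fun q s => (Finsupp.single (g q) s : T3))
        = Finsupp.single (g (bW, aW)) (1/2 : ℝ) + Finsupp.single (g (bW, cW)) (1/2 : ℝ)
          + Finsupp.single (g (aW, bW)) (1/2 : ℝ) + Finsupp.single (g (cW, bW)) (1/2 : ℝ) := by
    intro g
    rw [hsingle, sum4 (g := fun q s => Finsupp.single (g q) s)
      (hz := fun p => Finsupp.single_zero _) (hadd := fun p r s => Finsupp.single_add _ r s)]
  have expanda : ∀ (g : Word × Word → Word × Word × Word),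
      ((Δ (W aW)).sum fun q s => (Finsupp.single (g q) s : T3))
        = Finsupp.single (g (aW, aW)) (1 : ℝ) := by
    intro g
    rw [hΔa]
    unfold W2
    rw [Finsupp.sum_single_index (by simp)]
  have expandc : ∀ (g : Word × Word → Word × Word × Word),
      ((Δ (W cW)).sum fun q s => (Finsupp.single (g q) s : T3))
        = Finsupp.single (g (cW, cW)) (1 : ℝ) := by
    intro g
    rw [hΔc]
    unfold W2
    rw [Finsupp.sum_single_index (by simp)]
  have hcoeq := hco (W bW)
  simp only [expand, expandb, expanda, expandc] at hcoeq
  have hval := DFunLike.congr_fun hcoeq (bW, cW, aW)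
  norm_num (config := { decide := true })
    [Finsupp.single_apply, Finsupp.add_apply, Finsupp.smul_apply, smul_eq_mul] at hval

end
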